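/- arXiv:1303.1290 — 4 statements merged into one kernel-verified Lean document; each statement's English description precedes it below -/
import Mathlib

section
/- The group K_4, a subgroup of Equiv.Perm (Fin 4), is 3-representable but not 2-representable. -/
/-- The symmetry (invariance) group of a function `f` on boolean tuples indexed by `α`:
all permutations `σ` with `f (x ∘ σ) = f x` for every `x : α → Bool`. -/
def symmGroup {α V : Type*} (f : (α → Bool) → V) : Subgroup (Equiv.Perm α) where
  carrier := {σ | ∀ x : α → Bool, f (x ∘ σ) = f x}
  one_mem' := by intro x; simp
  mul_mem' := by
    intro a b ha hb x
    have h : x ∘ ⇑(a * b) = (x ∘ ⇑a) ∘ ⇑b := by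
      ext y; simp [Equiv.Perm.mul_apply, Function.comp]
    rw [h, hb, ha]
  inv_mem' := by
    intro a ha x
    have h := ha (x ∘ ⇑a⁻¹)
    have h2 : (x ∘ ⇑a⁻¹) ∘ ⇑a = x := by
      ext y; simp [Function.comp]
    rw [h2] at h
    exact h.symm

/-- A subgroup of `Equiv.Perm α` is `k`-representable if it is the symmetry group of a
`k`-valued boolean function. -/
def Representable (k : ℕ) {α : Type*} (G : Subgroup (Equiv.Perm α)) : Prop :=
  ∃ f : (α → Bool) → Fin k, G = symmGroup f

/-- The direct sum of two permutation groups, acting on the disjoint union. -/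
def directSum {α β : Type*} (G : Subgroup (Equiv.Perm α)) (H : Subgroup (Equiv.Perm β)) :
    Subgroup (Equiv.Perm (α ⊕ β)) :=
  (G.prod H).map (Equiv.Perm.sumCongrHom α β)

/-- A permutation group is regular if it is transitive and only the identity has a fixed point. -/
def IsRegularPermGroup {α : Type*} (G : Subgroup (Equiv.Perm α)) : Prop :=
  (∀ a b : α, ∃ σ ∈ G, σ a = b) ∧ ∀ σ ∈ G, ∀ a : α, σ a = a → σ = 1

/-- `B` is a direct sum of regular groups: under some identification of `α` with a finite
sigma type, `B` consists exactly of the permutations preserving each block and acting on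
block `i` as an element of a fixed regular group `G i`. -/
def IsDirectSumOfRegular {α : Type*} (B : Subgroup (Equiv.Perm α)) : Prop :=
  ∃ (ι : Type) (_ : Fintype ι) (β : ι → Type) (_ : ∀ i, Fintype (β i))
    (e : α ≃ Σ i, β i) (G : ∀ i, Subgroup (Equiv.Perm (β i))),
    (∀ i, IsRegularPermGroup (G i)) ∧
    ∀ π : Equiv.Perm α, π ∈ B ↔
      ∃ g : ∀ i, Equiv.Perm (β i), (∀ i, g i ∈ G i) ∧
        ∀ a : α, e (π a) = ⟨(e a).1, g (e a).1 (e a).2⟩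

/-- `C_n`, the cyclic group generated by the cycle `0 ↦ 1 ↦ ⋯ ↦ n-1 ↦ 0`. -/
def Cgroup (n : ℕ) : Subgroup (Equiv.Perm (Fin n)) := Subgroup.zpowers (finRotate n)

/-- The Klein four-group `K₄ ≤ S₄` generated by `(0 1)(2 3)` and `(0 2)(1 3)`. -/
def K4 : Subgroup (Equiv.Perm (Fin 4)) :=
  Subgroup.closure {Equiv.swap 0 1 * Equiv.swap 2 3, Equiv.swap 0 2 * Equiv.swap 1 3}

/-- Permutation isomorphism of permutation groups. -/
def PermIso {α β : Type*} (G : Subgroup (Equiv.Perm α)) (H : Subgroup (Equiv.Perm β)) : Prop :=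
  ∃ e : α ≃ β, ∀ σ : Equiv.Perm α, σ ∈ G ↔ e.permCongr σ ∈ H

/-- A set `S` is regular in `H` if the identity is the only element of `H` mapping `S` to itself. -/
def IsRegularSet {α : Type*} (S : Set α) (H : Subgroup (Equiv.Perm α)) : Prop :=
  ∀ σ ∈ H, ⇑σ '' S = S → σ = 1

/-- The subdirect sum `G/M ⊕_φ H/N`: all `Equiv.sumCongr σ τ` with `σ ∈ G`, `τ ∈ H` and
`φ (σ M) = τ N`. -/
def subdirectSum {α β : Type*} (G : Subgroup (Equiv.Perm α)) (H : Subgroup (Equiv.Perm β))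
    (M : Subgroup G) [M.Normal] (N : Subgroup H) [N.Normal]
    (φ : G ⧸ M ≃* H ⧸ N) : Subgroup (Equiv.Perm (α ⊕ β)) where
  carrier := {π | ∃ (σ : G) (τ : H),
    φ (QuotientGroup.mk σ) = QuotientGroup.mk τ ∧
    π = Equiv.Perm.sumCongrHom α β ((σ : Equiv.Perm α), (τ : Equiv.Perm β))}
  one_mem' := ⟨1, 1, by simp, by simp⟩
  mul_mem' := by
    rintro _ _ ⟨σ₁, τ₁, h1, rfl⟩ ⟨σ₂, τ₂, h2, rfl⟩
    refine ⟨σ₁ * σ₂, τ₁ * τ₂, ?_, ?_⟩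
    · rw [QuotientGroup.mk_mul, QuotientGroup.mk_mul, map_mul, h1, h2]
    · rw [← map_mul]
      rfl
  inv_mem' := by
    rintro _ ⟨σ, τ, h, rfl⟩
    refine ⟨σ⁻¹, τ⁻¹, ?_, ?_⟩
    · rw [QuotientGroup.mk_inv, QuotientGroup.mk_inv, map_inv, h]
    · rw [← map_inv]
      rfl

-- AUX

def aP : Equiv.Perm (Fin 4) := Equiv.swap 0 1 * Equiv.swap 2 3
def bP : Equiv.Perm (Fin 4) := Equiv.swap 0 2 * Equiv.swap 1 3

lemma mem_symmGroup {α V : Type*} {f : (α → Bool) → V} {σ : Equiv.Perm α} :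
    σ ∈ symmGroup f ↔ ∀ x : α → Bool, f (x ∘ σ) = f x := Iff.rfl

def K4' : Subgroup (Equiv.Perm (Fin 4)) where
  carrier := {1, aP, bP, aP * bP}
  one_mem' := Or.inl rfl
  mul_mem' := by
    intro x y hx hy
    simp only [Set.mem_insert_iff, Set.mem_singleton_iff] at *
    rcases hx with rfl|rfl|rfl|rfl <;> rcases hy with rfl|rfl|rfl|rfl <;> decide
  inv_mem' := by
    intro x hx
    simp only [Set.mem_insert_iff, Set.mem_singleton_iff] at *
    rcases hx with rfl|rfl|rfl|rfl <;> decide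

lemma K4_eq : K4 = K4' := by
  apply le_antisymm
  · rw [K4, Subgroup.closure_le]
    intro g hg
    rcases hg with rfl | rfl
    · exact Or.inr (Or.inl rfl)
    · exact Or.inr (Or.inr (Or.inl rfl))
  · intro σ hσ
    rcases hσ with rfl|rfl|rfl|rfl
    · exact one_mem _
    · exact Subgroup.subset_closure (Or.inl rfl)
    · exact Subgroup.subset_closure (Or.inr rfl)
    · exact mul_mem (Subgroup.subset_closure (Or.inl rfl)) (Subgroup.subset_closure (Or.inr rfl))

lemma mem_K4_iff (σ : Equiv.Perm (Fin 4)) :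
    σ ∈ K4 ↔ σ = 1 ∨ σ = aP ∨ σ = bP ∨ σ = aP * bP := by
  rw [K4_eq]
  simp only [K4', Subgroup.mem_mk, Set.mem_insert_iff, Set.mem_singleton_iff]
  exact Iff.rfl

lemma forall_vec {P : (Fin 4 → Bool) → Prop} (h : ∀ b0 b1 b2 b3, P ![b0,b1,b2,b3]) :
    ∀ x, P x := by
  intro x
  have hx : x = ![x 0, x 1, x 2, x 3] := by funext i; fin_cases i <;> rfl
  rw [hx]; exact h _ _ _ _

def f3 : (Fin 4 → Bool) → Fin 3 :=
  fun x => if x = ![true,false,true,false] ∨ x = ![false,true,false,true] then 1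
  else if x = ![true,false,false,true] ∨ x = ![false,true,true,false] then 2 else 0

lemma key (f : (Fin 4 → Bool) → Fin 2)
    (ha : ∀ b0 b1 b2 b3 : Bool, f ![b1,b0,b3,b2] = f ![b0,b1,b2,b3])
    (hb : ∀ b0 b1 b2 b3 : Bool, f ![b2,b3,b0,b1] = f ![b0,b1,b2,b3]) :
    ∃ σ : Equiv.Perm (Fin 4), σ ∉ K4 ∧ ∀ x : Fin 4 → Bool, f (x ∘ σ) = f x := by
  have hc : ∀ b0 b1 b2 b3 : Bool, f ![b3,b2,b1,b0] = f ![b0,b1,b2,b3] := fun b0 b1 b2 b3 =>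
    (ha b2 b3 b0 b1).trans (hb b0 b1 b2 b3)
  have e1 : f ![false,false,true,true] = f ![true,true,false,false] := hb true true false false
  have e2 : f ![false,true,false,true] = f ![true,false,true,false] := ha true false true false
  have e3 : f ![false,true,true,false] = f ![true,false,false,true] := ha true false false true
  have two : ∀ x y z : Fin 2, x ≠ y → x ≠ z → y = z := by decide
  by_cases h12 : f ![true,true,false,false] = f ![true,false,true,false]
  · refine ⟨Equiv.swap 0 3, by rw [mem_K4_iff]; decide, forall_vec ?_⟩
    intro b0 b1 b2 b3
    rw [show (![b0,b1,b2,b3] : Fin 4 → Bool) ∘ ⇑(Equiv.swap 0 3) = ![b3,b1,b2,b0] from by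
      funext i; fin_cases i <;> rfl]
    cases b0 <;> cases b1 <;> cases b2 <;> cases b3 <;> (try simp only [e1, e2, e3]) <;>
      first | rfl | exact ha _ _ _ _ | exact hb _ _ _ _ | exact hc _ _ _ _
            | exact h12 | exact h12.symm
  · by_cases h13 : f ![true,true,false,false] = f ![true,false,false,true]
    · refine ⟨Equiv.swap 0 2, by rw [mem_K4_iff]; decide, forall_vec ?_⟩
      intro b0 b1 b2 b3
      rw [show (![b0,b1,b2,b3] : Fin 4 → Bool) ∘ ⇑(Equiv.swap 0 2) = ![b2,b1,b0,b3] from by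
        funext i; fin_cases i <;> rfl]
      cases b0 <;> cases b1 <;> cases b2 <;> cases b3 <;> (try simp only [e1, e2, e3]) <;>
        first | rfl | exact ha _ _ _ _ | exact hb _ _ _ _ | exact hc _ _ _ _
              | exact h13 | exact h13.symm
    · have h23 : f ![true,false,true,false] = f ![true,false,false,true] := two _ _ _ h12 h13
      refine ⟨Equiv.swap 0 1, by rw [mem_K4_iff]; decide, forall_vec ?_⟩
      intro b0 b1 b2 b3
      rw [show (![b0,b1,b2,b3] : Fin 4 → Bool) ∘ ⇑(Equiv.swap 0 1) = ![b1,b0,b2,b3] from by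
        funext i; fin_cases i <;> rfl]
      cases b0 <;> cases b1 <;> cases b2 <;> cases b3 <;> (try simp only [e1, e2, e3]) <;>
        first | rfl | exact ha _ _ _ _ | exact hb _ _ _ _ | exact hc _ _ _ _
              | exact h23 | exact h23.symm

set_option maxHeartbeats 1000000 in
lemma f3_le : ∀ σ : Equiv.Perm (Fin 4), (∀ x, f3 (x ∘ σ) = f3 x) →
    (σ = 1 ∨ σ = aP ∨ σ = bP ∨ σ = aP * bP) := by decide

theorem K4_three_representable_not_two_representable :
    Representable 3 K4 ∧ ¬ Representable 2 K4 := by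
  constructor
  · refine ⟨f3, le_antisymm ?_ ?_⟩
    · intro σ hσ
      rw [mem_K4_iff] at hσ
      rw [mem_symmGroup]
      rcases hσ with rfl|rfl|rfl|rfl
      · decide
      · decide
      · decide
      · decide
    · intro σ hσ
      rw [mem_symmGroup] at hσ
      rw [mem_K4_iff]
      exact f3_le σ hσ
  · rintro ⟨f, hf⟩
    have haK : aP ∈ K4 := Subgroup.subset_closure (Or.inl rfl)
    have hbK : bP ∈ K4 := Subgroup.subset_closure (Or.inr rfl)
    rw [hf, mem_symmGroup] at haK hbK
    have ha : ∀ b0 b1 b2 b3 : Bool, f ![b1,b0,b3,b2] = f ![b0,b1,b2,b3] := by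
      intro b0 b1 b2 b3
      have := haK ![b0,b1,b2,b3]
      rwa [show (![b0,b1,b2,b3] : Fin 4 → Bool) ∘ ⇑aP = ![b1,b0,b3,b2] from by
        funext i; fin_cases i <;> rfl] at this
    have hb : ∀ b0 b1 b2 b3 : Bool, f ![b2,b3,b0,b1] = f ![b0,b1,b2,b3] := by
      intro b0 b1 b2 b3
      have := hbK ![b0,b1,b2,b3]
      rwa [show (![b0,b1,b2,b3] : Fin 4 → Bool) ∘ ⇑bP = ![b2,b3,b0,b1] from by
        funext i; fin_cases i <;> rfl] at this
    obtain ⟨σ, hσK, hσinv⟩ := key f ha hb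
    exact hσK (by rw [hf, mem_symmGroup]; exact hσinv)
end

section
/- For every i ≥ 2, the parallel sum C_i^{(2)}, namely the cyclic subgroup of Equiv.Perm (Fin i ⊕ Fin i) generated by Equiv.sumCongr (finRotate i) (finRotate i) (the permutation acting as the i-cycle simultaneously on both copies of Fin i), is 2-representable. -/
section ParAux

variable {n : ℕ}

open Fin.CommRing

def Fam (n : ℕ) : Set (Set (Fin (n+2) ⊕ Fin (n+2))) :=
  {S | (∃ j, S = {Sum.inl j}) ∨ (∃ j, S = {Sum.inl j, Sum.inr j}) ∨
       (∃ j, S = {Sum.inl j, Sum.inr j, Sum.inr (j + 1)})}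

noncomputable def bf (n : ℕ) : ((Fin (n+2) ⊕ Fin (n+2)) → Bool) → Fin 2 :=
  fun x => open scoped Classical in if {a | x a = true} ∈ Fam n then 1 else 0

lemma bf_eq_iff (x y : (Fin (n+2) ⊕ Fin (n+2)) → Bool) :
    bf n x = bf n y ↔ ({a | x a = true} ∈ Fam n ↔ {a | y a = true} ∈ Fam n) := by
  classical
  unfold bf
  split_ifs with h1 h2 h2
  · simp [h1, h2]
  · simpa [h1, h2] using (one_ne_zero : (1 : Fin 2) ≠ 0)
  · simp only [eq_comm (a := (0 : Fin 2))]
    simpa [h1, h2] using (one_ne_zero : (1 : Fin 2) ≠ 0)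
  · simp [h1, h2]

lemma mem_symm_iff (σ : Equiv.Perm (Fin (n+2) ⊕ Fin (n+2))) :
    σ ∈ symmGroup (bf n) ↔ ∀ S : Set (Fin (n+2) ⊕ Fin (n+2)), S ∈ Fam n ↔ σ '' S ∈ Fam n := by
  classical
  have hmem : ∀ x, σ ∈ symmGroup (bf n) →
      bf n (x ∘ σ) = bf n x := fun x h => h x
  constructor
  · intro h S
    have hx := (bf_eq_iff ((fun a => decide (a ∈ σ '' S)) ∘ σ) (fun a => decide (a ∈ σ '' S))).mp
      (h _)
    have h1 : {a | ((fun a => decide (a ∈ σ '' S)) ∘ ⇑σ) a = true} = S := by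
      ext a
      simp [Function.comp, σ.injective.mem_set_image]
    have h2 : {a | (fun a => decide (a ∈ σ '' S)) a = true} = σ '' S := by
      ext a; simp
    rw [h1, h2] at hx
    exact hx
  · intro h x
    rw [bf_eq_iff]
    have h1 : {a | (x ∘ ⇑σ) a = true} = ⇑σ ⁻¹' {a | x a = true} := rfl
    rw [h1]
    have h2 := h (⇑σ ⁻¹' {a | x a = true})
    rwa [Equiv.image_preimage] at h2

lemma fin_one_ne_zero' : (1 : Fin (n + 2)) ≠ 0 := by
  intro h
  have := congrArg Fin.val h
  simp [Fin.val_one] at this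

lemma fin_succ_ne_self (j : Fin (n+2)) : j + 1 ≠ j := by
  intro h
  have h1 : (1 : Fin (n+2)) = 0 := by
    have := congrArg (fun z => z - j) h
    simpa [add_comm, add_sub_cancel_right] using this
  exact fin_one_ne_zero' h1

lemma hard (σ : Equiv.Perm (Fin (n+2) ⊕ Fin (n+2)))
    (h : ∀ S : Set (Fin (n+2) ⊕ Fin (n+2)), S ∈ Fam n ↔ σ '' S ∈ Fam n) :
    ∃ t : Fin (n+2), ∀ j, σ (Sum.inl j) = Sum.inl (j + t) ∧ σ (Sum.inr j) = Sum.inr (j + t) := by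
  classical
  -- Step 1: σ maps left elements to left elements
  have step1 : ∀ j : Fin (n+2), ∃ k, σ (Sum.inl j) = Sum.inl k := by
    intro j
    have h1 : ({Sum.inl j} : Set (Fin (n+2) ⊕ Fin (n+2))) ∈ Fam n := Or.inl ⟨j, rfl⟩
    have h2 := (h _).mp h1
    rw [Set.image_singleton] at h2
    rcases h2 with ⟨k, hk⟩ | ⟨k, hk⟩ | ⟨k, hk⟩
    · exact ⟨k, by rwa [Set.singleton_eq_singleton_iff] at hk⟩
    · exfalso
      have m1 : (Sum.inl k : Fin (n+2) ⊕ Fin (n+2)) ∈ ({σ (Sum.inl j)} : Set _) := by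
        rw [hk]; simp
      have m2 : (Sum.inr k : Fin (n+2) ⊕ Fin (n+2)) ∈ ({σ (Sum.inl j)} : Set _) := by
        rw [hk]; simp
      rw [Set.mem_singleton_iff] at m1 m2
      exact absurd (m1.trans m2.symm) (by simp)
    · exfalso
      have m1 : (Sum.inl k : Fin (n+2) ⊕ Fin (n+2)) ∈ ({σ (Sum.inl j)} : Set _) := by
        rw [hk]; simp
      have m2 : (Sum.inr k : Fin (n+2) ⊕ Fin (n+2)) ∈ ({σ (Sum.inl j)} : Set _) := by
        rw [hk]; simp
      rw [Set.mem_singleton_iff] at m1 m2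
      exact absurd (m1.trans m2.symm) (by simp)
  choose π hπ using step1
  have πinj : Function.Injective π := by
    intro a b hab
    have : σ (Sum.inl a) = σ (Sum.inl b) := by rw [hπ a, hπ b, hab]
    simpa using σ.injective this
  have πsurj : Function.Surjective π :=
    Finite.surjective_of_injective πinj
  -- Step 1': σ maps right elements to right elements
  have step1' : ∀ j : Fin (n+2), ∃ k, σ (Sum.inr j) = Sum.inr k := by
    intro j
    cases hs : σ (Sum.inr j) with
    | inl k =>
      exfalso
      obtain ⟨m, hm⟩ := πsurj k
      have : σ (Sum.inl m) = σ (Sum.inr j) := by rw [hπ m, hm, hs]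
      exact absurd (σ.injective this) (by simp)
    | inr k => exact ⟨k, rfl⟩
  choose ρ hρ using step1'
  have ρinj : Function.Injective ρ := by
    intro a b hab
    have : σ (Sum.inr a) = σ (Sum.inr b) := by rw [hρ a, hρ b, hab]
    simpa using σ.injective this
  -- Step 2: ρ = π
  have step2 : ∀ j, ρ j = π j := by
    intro j
    have h1 : ({Sum.inl j, Sum.inr j} : Set (Fin (n+2) ⊕ Fin (n+2))) ∈ Fam n :=
      Or.inr (Or.inl ⟨j, rfl⟩)
    have h2 := (h _).mp h1
    rw [Set.image_insert_eq, Set.image_singleton, hπ, hρ] at h2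
    rcases h2 with ⟨k, hk⟩ | ⟨k, hk⟩ | ⟨k, hk⟩
    · exfalso
      have m1 : (Sum.inr (ρ j) : Fin (n+2) ⊕ Fin (n+2)) ∈ ({Sum.inl k} : Set _) := by
        rw [← hk]; simp
      simp at m1
    · have m1 : (Sum.inl (π j) : Fin (n+2) ⊕ Fin (n+2)) ∈
          ({Sum.inl k, Sum.inr k} : Set (Fin (n+2) ⊕ Fin (n+2))) := by rw [← hk]; simp
      have m2 : (Sum.inr (ρ j) : Fin (n+2) ⊕ Fin (n+2)) ∈
          ({Sum.inl k, Sum.inr k} : Set (Fin (n+2) ⊕ Fin (n+2))) := by rw [← hk]; simp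
      simp at m1 m2
      rw [m1, m2]
    · exfalso
      have m1 : (Sum.inr k : Fin (n+2) ⊕ Fin (n+2)) ∈
          ({Sum.inl (π j), Sum.inr (ρ j)} : Set (Fin (n+2) ⊕ Fin (n+2))) := by rw [hk]; simp
      have m2 : (Sum.inr (k+1) : Fin (n+2) ⊕ Fin (n+2)) ∈
          ({Sum.inl (π j), Sum.inr (ρ j)} : Set (Fin (n+2) ⊕ Fin (n+2))) := by rw [hk]; simp
      simp at m1 m2
      exact fin_succ_ne_self k (m2.trans m1.symm)
  -- Step 3: π (j+1) = π j + 1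
  have step3 : ∀ j, π (j + 1) = π j + 1 := by
    intro j
    have h1 : ({Sum.inl j, Sum.inr j, Sum.inr (j+1)} : Set (Fin (n+2) ⊕ Fin (n+2))) ∈ Fam n :=
      Or.inr (Or.inr ⟨j, rfl⟩)
    have h2 := (h _).mp h1
    rw [Set.image_insert_eq, Set.image_insert_eq, Set.image_singleton, hπ, hρ, hρ, step2] at h2
    have hne : ρ (j + 1) ≠ π j := by
      intro hcon
      exact fin_succ_ne_self j (ρinj (by rw [hcon, ← step2]))
    rcases h2 with ⟨k, hk⟩ | ⟨k, hk⟩ | ⟨k, hk⟩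
    · exfalso
      have m1 : (Sum.inr (π j) : Fin (n+2) ⊕ Fin (n+2)) ∈ ({Sum.inl k} : Set _) := by
        rw [← hk]; simp
      simp at m1
    · exfalso
      have m1 : (Sum.inr (π j) : Fin (n+2) ⊕ Fin (n+2)) ∈
          ({Sum.inl k, Sum.inr k} : Set (Fin (n+2) ⊕ Fin (n+2))) := by rw [← hk]; simp
      have m2 : (Sum.inr (ρ (j+1)) : Fin (n+2) ⊕ Fin (n+2)) ∈
          ({Sum.inl k, Sum.inr k} : Set (Fin (n+2) ⊕ Fin (n+2))) := by rw [← hk]; simp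
      simp at m1 m2
      exact hne (m2.trans m1.symm)
    · have m0 : (Sum.inl (π j) : Fin (n+2) ⊕ Fin (n+2)) ∈
          ({Sum.inl k, Sum.inr k, Sum.inr (k+1)} : Set (Fin (n+2) ⊕ Fin (n+2))) := by
        rw [← hk]; simp
      simp at m0
      subst m0
      have m2 : (Sum.inr (ρ (j+1)) : Fin (n+2) ⊕ Fin (n+2)) ∈
          ({Sum.inl (π j), Sum.inr (π j), Sum.inr (π j + 1)} :
            Set (Fin (n+2) ⊕ Fin (n+2))) := by rw [← hk]; simp
      simp at m2
      rcases m2 with m2 | m2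
      · exact absurd m2 hne
      · rw [← step2, m2]
  -- π is translation by π 0
  have key : ∀ m : ℕ, π ((m : Fin (n+2))) = (m : Fin (n+2)) + π 0 := by
    intro m
    induction m with
    | zero => simp
    | succ m ih =>
      have : ((m + 1 : ℕ) : Fin (n+2)) = (m : Fin (n+2)) + 1 := by
        push_cast; ring
      rw [this, step3, ih, add_right_comm]
  refine ⟨π 0, fun j => ⟨?_, ?_⟩⟩
  · rw [hπ j]
    congr 1
    have := key j.val
    rwa [Fin.cast_val_eq_self] at this
  · rw [hρ j, step2]
    congr 1
    have := key j.val
    rwa [Fin.cast_val_eq_self] at this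

/-- The simultaneous rotation. -/
def crot (n : ℕ) : Equiv.Perm (Fin (n+2) ⊕ Fin (n+2)) :=
  Equiv.sumCongr (finRotate (n+2)) (finRotate (n+2))

lemma crot_inl (j : Fin (n+2)) : crot n (Sum.inl j) = Sum.inl (j + 1) := by
  simp [crot, finRotate_succ_apply]

lemma crot_inr (j : Fin (n+2)) : crot n (Sum.inr j) = Sum.inr (j + 1) := by
  simp [crot, finRotate_succ_apply]

lemma crot_inv_inl (j : Fin (n+2)) : (crot n)⁻¹ (Sum.inl j) = Sum.inl (j - 1) := by
  rw [Equiv.Perm.inv_def, Equiv.symm_apply_eq, crot_inl, sub_add_cancel]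

lemma crot_inv_inr (j : Fin (n+2)) : (crot n)⁻¹ (Sum.inr j) = Sum.inr (j - 1) := by
  rw [Equiv.Perm.inv_def, Equiv.symm_apply_eq, crot_inr, sub_add_cancel]

lemma crot_image (S : Set (Fin (n+2) ⊕ Fin (n+2))) (hS : S ∈ Fam n) :
    ⇑(crot n) '' S ∈ Fam n := by
  rcases hS with ⟨j, rfl⟩ | ⟨j, rfl⟩ | ⟨j, rfl⟩
  · exact Or.inl ⟨j + 1, by rw [Set.image_singleton, crot_inl]⟩
  · refine Or.inr (Or.inl ⟨j + 1, ?_⟩)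
    rw [Set.image_insert_eq, Set.image_singleton, crot_inl, crot_inr]
  · refine Or.inr (Or.inr ⟨j + 1, ?_⟩)
    rw [Set.image_insert_eq, Set.image_insert_eq, Set.image_singleton,
      crot_inl, crot_inr, crot_inr]

lemma crot_inv_image (S : Set (Fin (n+2) ⊕ Fin (n+2))) (hS : S ∈ Fam n) :
    ⇑(crot n)⁻¹ '' S ∈ Fam n := by
  rcases hS with ⟨j, rfl⟩ | ⟨j, rfl⟩ | ⟨j, rfl⟩
  · exact Or.inl ⟨j - 1, by rw [Set.image_singleton, crot_inv_inl]⟩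
  · refine Or.inr (Or.inl ⟨j - 1, ?_⟩)
    rw [Set.image_insert_eq, Set.image_singleton, crot_inv_inl, crot_inv_inr]
  · refine Or.inr (Or.inr ⟨j - 1, ?_⟩)
    rw [Set.image_insert_eq, Set.image_insert_eq, Set.image_singleton,
      crot_inv_inl, crot_inv_inr, crot_inv_inr]
    have hj : j + 1 - 1 = j - 1 + 1 := by ring
    rw [hj]

lemma crot_mem_symm : crot n ∈ symmGroup (bf n) := by
  rw [mem_symm_iff]
  intro S
  constructor
  · exact crot_image S
  · intro h2
    have h3 := crot_inv_image _ h2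
    have key : ⇑(crot n)⁻¹ '' (⇑(crot n) '' S) = S := by
      simp [Set.image_image]
    rwa [key] at h3

lemma crot_pow_inl (m : ℕ) (j : Fin (n+2)) :
    ((crot n) ^ m) (Sum.inl j) = Sum.inl (j + (m : Fin (n+2))) := by
  induction m generalizing j with
  | zero => simp
  | succ m ih =>
    rw [pow_succ, Equiv.Perm.mul_apply, crot_inl, ih]
    congr 1
    push_cast
    ring

lemma crot_pow_inr (m : ℕ) (j : Fin (n+2)) :
    ((crot n) ^ m) (Sum.inr j) = Sum.inr (j + (m : Fin (n+2))) := by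
  induction m generalizing j with
  | zero => simp
  | succ m ih =>
    rw [pow_succ, Equiv.Perm.mul_apply, crot_inr, ih]
    congr 1
    push_cast
    ring

end ParAux

theorem parallel_sum_representable (i : ℕ) (hi : 2 ≤ i) :
    Representable 2 (Subgroup.zpowers
      (Equiv.sumCongr (finRotate i) (finRotate i) : Equiv.Perm (Fin i ⊕ Fin i))) := by
  obtain ⟨n, rfl⟩ : ∃ n, i = n + 2 := ⟨i - 2, by omega⟩
  refine ⟨bf n, ?_⟩
  have hc : (Equiv.sumCongr (finRotate (n+2)) (finRotate (n+2)) :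
      Equiv.Perm (Fin (n+2) ⊕ Fin (n+2))) = crot n := rfl
  rw [hc]
  apply le_antisymm
  · rw [Subgroup.zpowers_le]
    exact crot_mem_symm
  · intro σ hσ
    obtain ⟨t, ht⟩ := hard σ ((mem_symm_iff σ).mp hσ)
    refine Subgroup.mem_zpowers_iff.mpr ⟨(t.val : ℤ), ?_⟩
    rw [zpow_natCast]
    ext a
    cases a with
    | inl j => rw [crot_pow_inl, Fin.cast_val_eq_self, (ht j).1]
    | inr j => rw [crot_pow_inr, Fin.cast_val_eq_self, (ht j).2]
end

section
/- Let β be a finite type and let H be a 2-representable subgroup of Equiv.Perm β. Then the direct sum of the trivial group on a one-point type with H, i.e. the subgroup of Equiv.Perm (Unit ⊕ β) of all permutations Equiv.sumCongr 1 τ with τ ∈ H, is 2-representable. -/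
theorem trivial_directSum_representable
    {β : Type*} [Fintype β] (H : Subgroup (Equiv.Perm β))
    (hH : Representable 2 H) :
    Representable 2 (directSum (⊥ : Subgroup (Equiv.Perm Unit)) H) := by
  classical
  obtain ⟨f, rfl⟩ := hH
  set c : Fin 2 := f (fun _ => false) with hc
  refine ⟨fun x => if x (Sum.inl ()) then f (x ∘ Sum.inr)
    else (if (Finset.univ.filter (fun b => x (Sum.inr b) = true)).card = 1 then 1 - c else c), ?_⟩
  have hne : ∀ d : Fin 2, ¬ (1 - d = d) := by decide
  ext π
  simp only [directSum, Subgroup.mem_map, Subgroup.mem_prod, Subgroup.mem_bot]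
  constructor
  · rintro ⟨⟨σ, τ⟩, ⟨-, hτ⟩, rfl⟩
    intro x
    have h1 : (x ∘ (Equiv.Perm.sumCongrHom Unit β (σ, τ))) (Sum.inl ()) = x (Sum.inl ()) := by
      simp [Equiv.Perm.sumCongrHom]
    have h2 : (x ∘ (Equiv.Perm.sumCongrHom Unit β (σ, τ))) ∘ Sum.inr = (x ∘ Sum.inr) ∘ τ := by
      ext b; simp [Equiv.Perm.sumCongrHom]
    have h3 : (Finset.univ.filter
        (fun b => (x ∘ (Equiv.Perm.sumCongrHom Unit β (σ, τ))) (Sum.inr b) = true)).card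
        = (Finset.univ.filter (fun b => x (Sum.inr b) = true)).card := by
      apply Finset.card_bij (fun b _ => τ b)
      · intro a ha
        simp only [Finset.mem_filter, Finset.mem_univ, true_and] at ha ⊢
        simpa [Equiv.Perm.sumCongrHom] using ha
      · intro a _ b _ h
        exact τ.injective h
      · intro b hb
        refine ⟨τ⁻¹ b, ?_, by simp⟩
        simp only [Finset.mem_filter, Finset.mem_univ, true_and] at hb ⊢
        simpa [Equiv.Perm.sumCongrHom] using hb
    dsimp only
    rw [h1, h2, h3, hτ (x ∘ Sum.inr)]
  · intro hπ
    -- Step 1: π fixes inl ()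
    have hfix : π (Sum.inl ()) = Sum.inl () := by
      by_contra hne'
      set x : Unit ⊕ β → Bool := fun s => decide (s = Sum.inl ()) with hx
      have hgx := hπ x
      have hxval : x (Sum.inl ()) = true := by simp [hx]
      have hxinr : x ∘ Sum.inr = fun _ => false := by
        ext b; simp [hx]
      have hxπ : (x ∘ π) (Sum.inl ()) = false := by
        simp only [Function.comp, hx, decide_eq_false_iff_not]
        exact hne'
      -- there is exactly one b with π (inr b) = inl ()
      obtain ⟨b₀, hb₀⟩ : ∃ b₀, π⁻¹ (Sum.inl ()) = Sum.inr b₀ := by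
        cases h : π⁻¹ (Sum.inl ()) with
        | inl u =>
          exfalso
          apply hne'
          have h2 := congrArg (⇑π) h
          simp only [Equiv.Perm.inv_def, Equiv.apply_symm_apply] at h2
          cases u
          exact h2.symm
        | inr b => exact ⟨b, rfl⟩
      have hcard : (Finset.univ.filter (fun b => (x ∘ π) (Sum.inr b) = true)).card = 1 := by
        have : (Finset.univ.filter (fun b => (x ∘ π) (Sum.inr b) = true)) = {b₀} := by
          ext b
          simp only [Finset.mem_filter, Finset.mem_univ, true_and, Finset.mem_singleton,
            Function.comp, hx, decide_eq_true_eq]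
          constructor
          · intro h
            have := congrArg (⇑π⁻¹) h
            simp at this
            rw [← Equiv.Perm.inv_def, hb₀] at this
            exact Sum.inr_injective this
          · rintro rfl
            have := congrArg (⇑π) hb₀
            simpa using this.symm
        rw [this, Finset.card_singleton]
      dsimp only at hgx
      rw [hxval, hxπ, hcard, hxinr] at hgx
      simp at hgx
      exact hne c hgx
    -- Step 2: construct τ
    have hmove : ∀ b : β, ∃ b', π (Sum.inr b) = Sum.inr b' := by
      intro b
      cases h : π (Sum.inr b) with
      | inl u =>
        exfalso
        cases u
        have := π.injective (h.trans hfix.symm)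
        simp at this
      | inr b' => exact ⟨b', rfl⟩
    choose τ₀ hτ₀ using hmove
    have hinj : Function.Injective τ₀ := by
      intro a b h
      have h2 : π (Sum.inr a) = π (Sum.inr b) := by rw [hτ₀, hτ₀, h]
      simpa using π.injective h2
    have hbij := Finite.injective_iff_bijective.mp hinj
    set τ : Equiv.Perm β := Equiv.ofBijective τ₀ hbij with hτdef
    have hτcoe : ∀ b, τ b = τ₀ b := fun b => rfl
    refine ⟨(1, τ), ⟨rfl, ?_⟩, ?_⟩
    · intro y
      have key := hπ (Sum.elim (fun _ => true) y)
      dsimp only at key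
      have e1 : (Sum.elim (fun _ => true) y ∘ ⇑π) (Sum.inl ()) = true := by
        simp [Function.comp, hfix]
      have e2 : (Sum.elim (fun _ => true) y ∘ ⇑π) ∘ Sum.inr = y ∘ ⇑τ := by
        ext b; simp [Function.comp, hτ₀ b, hτcoe]
      rw [e1, e2] at key
      simpa using key
    · ext s
      cases s with
      | inl u => cases u; simp [Equiv.Perm.sumCongrHom, hfix]
      | inr b => simp [Equiv.Perm.sumCongrHom, hτcoe, hτ₀]
end

section
/- Let β be a finite type with n elements and let H ≤ Equiv.Perm β satisfy H = G(h) for some 4-valued boolean function h on β such that h y = 0 for every y : β → Bool having exactly n − 1 true coordinates. Then the direct sum of the trivial group on a one-point type with H, i.e. the subgroup of Equiv.Perm (Unit ⊕ β) of all permutations Equiv.sumCongr 1 τ with τ ∈ H, is 2-representable. -/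
theorem trivial_directSum_representable_of_four_valued
    {β : Type*} [Fintype β] (H : Subgroup (Equiv.Perm β))
    (h : (β → Bool) → Fin 4) (hHh : H = symmGroup h)
    (h0 : ∀ y : β → Bool,
      (Finset.univ.filter fun b => y b = true).card = Fintype.card β - 1 → h y = 0) :
    Representable 2 (directSum (⊥ : Subgroup (Equiv.Perm Unit)) H) := by
  classical
  set bT : Fin 4 → Fin 2 := fun v => ⟨v.val / 2, by have := v.isLt; omega⟩ with hbT
  set bF : Fin 4 → Fin 2 := fun v => ⟨v.val % 2, by have := v.isLt; omega⟩ with hbF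
  set f : ((Unit ⊕ β) → Bool) → Fin 2 := fun x =>
    if x (Sum.inl ()) = true then bT (h (x ∘ Sum.inr))
    else if (x ∘ Sum.inr) = (fun _ => true) then 1
    else bF (h (x ∘ Sum.inr)) with hf
  refine ⟨f, ?_⟩
  -- key: invariance of f under sumCongr 1 τ for τ ∈ symmGroup h
  have key : ∀ (τ : Equiv.Perm β), (∀ y : β → Bool, h (y ∘ τ) = h y) →
      ∀ x : (Unit ⊕ β) → Bool, f (x ∘ (Equiv.sumCongr (1 : Equiv.Perm Unit) τ)) = f x := by
    intro τ hτ x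
    have e1 : (x ∘ (Equiv.sumCongr (1 : Equiv.Perm Unit) τ)) (Sum.inl ()) = x (Sum.inl ()) := rfl
    have e2 : (x ∘ (Equiv.sumCongr (1 : Equiv.Perm Unit) τ)) ∘ Sum.inr = (x ∘ Sum.inr) ∘ τ := rfl
    have e3 : ((x ∘ Sum.inr) ∘ ⇑τ = fun _ => true) ↔ (x ∘ Sum.inr = fun _ => true) := by
      constructor
      · intro hc
        funext b
        have := congrFun hc (τ.symm b)
        simpa using this
      · intro hc; funext b; exact congrFun hc (τ b)
    rw [hf]
    simp only [e1, e2, hτ (x ∘ Sum.inr)]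
    by_cases h1 : x (Sum.inl ()) = true
    · simp [h1]
    · simp only [h1, if_false]
      by_cases h2 : x ∘ Sum.inr = fun _ => true
      · rw [if_pos (e3.mpr h2), if_pos h2]
      · rw [if_neg (fun hc => h2 (e3.mp hc)), if_neg h2]
  ext π
  constructor
  · rintro ⟨⟨σ, τ⟩, ⟨-, hτH⟩, rfl⟩
    have hσ1 : σ = 1 := Subsingleton.elim _ _
    intro x
    have : Equiv.Perm.sumCongrHom Unit β (σ, τ) = Equiv.sumCongr (1 : Equiv.Perm Unit) τ := by
      rw [hσ1]; rfl
    rw [this]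
    exact key τ (by rw [hHh] at hτH; exact hτH) x
  · intro hπ
    -- hπ : ∀ x, f (x ∘ π) = f x
    have hπ' : ∀ x : (Unit ⊕ β) → Bool, f (x ∘ ⇑π) = f x := hπ
    -- Step 1: π fixes inl
    have hfix : π (Sum.inl ()) = Sum.inl () := by
      rcases hc : π (Sum.inl ()) with u | b
      · cases u; rfl
      · exfalso
        set x : (Unit ⊕ β) → Bool := fun s => if s = Sum.inr b then false else true with hx
        have hx1 : f x = 0 := by
          have hcard : (Finset.univ.filter fun c => (x ∘ Sum.inr) c = true).card
              = Fintype.card β - 1 := by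
            have : (Finset.univ.filter fun c => (x ∘ Sum.inr) c = true) = {b}ᶜ := by
              ext c
              simp only [hx, Finset.mem_filter, Finset.mem_univ, true_and,
                Finset.mem_compl, Finset.mem_singleton, Function.comp_apply]
              by_cases hcb : c = b <;> simp [hcb]
            rw [this, Finset.card_compl, Finset.card_singleton]
          have h00 := h0 _ hcard
          have hxl : x (Sum.inl ()) = true := by simp [hx]
          rw [hf]; simp only [hxl, if_true, h00]
          rfl
        have hx2 : f (x ∘ ⇑π) = 1 := by
          have hl : (x ∘ ⇑π) (Sum.inl ()) = false := by
            simp [hx, hc]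
          have hr : (x ∘ ⇑π) ∘ Sum.inr = fun _ => true := by
            funext c
            have : π (Sum.inr c) ≠ Sum.inr b := by
              intro hcc
              have := π.injective (hcc.trans hc.symm)
              simp at this
            simp [hx, this]
          rw [hf]
          simp only [hl, hr]
          simp
        rw [hπ' x, hx1] at hx2
        exact absurd hx2 (by decide)
    -- Step 2: π is in the range of sumCongrHom
    have hmaps : Set.MapsTo ⇑π (Set.range Sum.inl) (Set.range Sum.inl) := by
      rintro s ⟨u, rfl⟩
      cases u
      exact ⟨(), hfix.symm⟩
    obtain ⟨⟨σ, τ⟩, hστ⟩ := Equiv.Perm.mem_sumCongrHom_range_of_perm_mapsTo_inl hmaps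
    have hσ1 : σ = 1 := Subsingleton.elim _ _
    have hπeq : π = Equiv.sumCongr (1 : Equiv.Perm Unit) τ := by
      rw [← hστ, hσ1]; rfl
    -- Step 3: τ ∈ H
    have hτH : τ ∈ H := by
      rw [hHh]
      intro y
      -- use x with inl ↦ true
      have eT : f ((Sum.elim (fun _ => true) y : (Unit ⊕ β) → Bool) ∘ ⇑π)
          = f (Sum.elim (fun _ => true) y) := hπ' _
      have eF : f ((Sum.elim (fun _ => false) y : (Unit ⊕ β) → Bool) ∘ ⇑π)
          = f (Sum.elim (fun _ => false) y) := hπ' _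
      have cT : (Sum.elim (fun _ => true) y : (Unit ⊕ β) → Bool) ∘ ⇑π
          = Sum.elim (fun _ => true) (y ∘ τ) := by
        rw [hπeq]; funext s; cases s <;> rfl
      have cF : (Sum.elim (fun _ => false) y : (Unit ⊕ β) → Bool) ∘ ⇑π
          = Sum.elim (fun _ => false) (y ∘ τ) := by
        rw [hπeq]; funext s; cases s <;> rfl
      rw [cT] at eT; rw [cF] at eF
      have elimT : ∀ z : β → Bool,
          f (Sum.elim (fun _ => true) z) = bT (h z) := by
        intro z
        rw [hf]
        have : (Sum.elim (fun _ => true) z : (Unit ⊕ β) → Bool) ∘ Sum.inr = z := rfl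
        simp only [this]
        rfl
      have elimF : ∀ z : β → Bool, z ≠ (fun _ => true) →
          f (Sum.elim (fun _ => false) z) = bF (h z) := by
        intro z hz
        rw [hf]
        have h1 : (Sum.elim (fun _ => false) z : (Unit ⊕ β) → Bool) (Sum.inl ()) = false := rfl
        have h2 : (Sum.elim (fun _ => false) z : (Unit ⊕ β) → Bool) ∘ Sum.inr = z := rfl
        simp only [h1, h2, Bool.false_eq_true, if_false, if_neg hz]
      by_cases hy : y = fun _ => true
      · have : y ∘ ⇑τ = y := by subst hy; funext b; rfl
        rw [this]
      · have hyτ : y ∘ ⇑τ ≠ fun _ => true := by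
          intro hc
          apply hy
          funext b
          have := congrFun hc (τ.symm b)
          simpa using this
        rw [elimT, elimT] at eT
        rw [elimF _ hyτ, elimF _ hy] at eF
        have vT : (h (y ∘ ⇑τ)).val / 2 = (h y).val / 2 := congrArg Fin.val eT
        have vF : (h (y ∘ ⇑τ)).val % 2 = (h y).val % 2 := congrArg Fin.val eF
        have b1 := (h (y ∘ ⇑τ)).isLt
        have b2 := (h y).isLt
        exact Fin.ext (by omega)
    exact ⟨(σ, τ), ⟨by simp [hσ1], hτH⟩, hστ⟩
end
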